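/- Let n ≥ 1, 1 ≤ p < ∞, 0 ≤ λ < n and 0 ≤ α < λ. If w is a weight on ℝⁿ with w ∈ A_p, then the weight x ↦ |x|^α w(x) belongs to A_{p + λ/n}. -/

import Mathlib

open MeasureTheory Metric ENNReal NNReal Topology Filter

noncomputable section

/-- Euclidean space ℝⁿ. -/
abbrev Euc (n : ℕ) := EuclideanSpace ℝ (Fin n)

/-- A weight on ℝⁿ: a nonnegative locally integrable function. -/
def IsWeight (n : ℕ) (w : Euc n → ℝ) : Prop :=
  (∀ x, 0 ≤ w x) ∧ LocallyIntegrable w volume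

/-- `w(A) = ∫_A w`. -/
def wInt (n : ℕ) (w : Euc n → ℝ) (s : Set (Euc n)) : ℝ≥0∞ :=
  ∫⁻ y in s, ENNReal.ofReal (w y)

/-- The `A_q` constant for `1 < q`:
`sup_B (w(B)/|B|) ((w^{1-q'}(B))/|B|)^{q-1}` with `q' = q/(q-1)`. -/
def ApConst (n : ℕ) (q : ℝ) (w : Euc n → ℝ) : ℝ≥0∞ :=
  ⨆ (x : Euc n) (r : ℝ) (_ : 0 < r),
    (wInt n w (ball x r) / volume (ball x r)) *
      (wInt n (fun y => w y ^ (1 - q / (q - 1))) (ball x r) / volume (ball x r)) ^ (q - 1)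

/-- The `A_1` constant: the least `c` such that for every ball `B`,
`w(B)/|B| ≤ c w(x)` for a.e. `x ∈ B`. -/
def A1Const (n : ℕ) (w : Euc n → ℝ) : ℝ≥0∞ :=
  sInf {c : ℝ≥0∞ | ∀ (x : Euc n) (r : ℝ), 0 < r →
    ∀ᵐ y ∂(volume.restrict (ball x r)),
      wInt n w (ball x r) / volume (ball x r) ≤ c * ENNReal.ofReal (w y)}

/-- The Muckenhoupt constant `[w]_{A_q}` (for `q = 1` the `A_1` constant). -/
def muckConst (n : ℕ) (q : ℝ) (w : Euc n → ℝ) : ℝ≥0∞ :=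
  if q = 1 then A1Const n w else ApConst n q w

/-- Membership in the Muckenhoupt class `A_q`. -/
def MemAp (n : ℕ) (q : ℝ) (w : Euc n → ℝ) : Prop := muckConst n q w < ⊤

/-- The reverse Hölder `RH_σ` constant: the least `c` such that
`(|B|⁻¹ ∫_B w^σ)^{1/σ} ≤ c |B|⁻¹ ∫_B w` for all balls `B`. -/
def RHConst (n : ℕ) (σ : ℝ) (w : Euc n → ℝ) : ℝ≥0∞ :=
  sInf {c : ℝ≥0∞ | ∀ (x : Euc n) (r : ℝ), 0 < r →
    ((volume (ball x r))⁻¹ * ∫⁻ y in ball x r, ENNReal.ofReal (w y ^ σ)) ^ (1 / σ) ≤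
      c * ((volume (ball x r))⁻¹ * wInt n w (ball x r))}

/-- Membership in the reverse Hölder class `RH_σ`. -/
def MemRH (n : ℕ) (σ : ℝ) (w : Euc n → ℝ) : Prop := RHConst n σ w < ⊤

/-- `‖f‖_{L^p(w)} = (∫ |f|^p w)^{1/p}`. -/
def lpNorm (n : ℕ) (p : ℝ) (w f : Euc n → ℝ) : ℝ≥0∞ :=
  (∫⁻ x, ENNReal.ofReal (|f x| ^ p * w x)) ^ (1 / p)

/-- `‖g‖_{L^{p,∞}(w)} = sup_{t>0} t (w{|g|>t})^{1/p}`. -/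
def weakLpNorm (n : ℕ) (p : ℝ) (w g : Euc n → ℝ) : ℝ≥0∞ :=
  ⨆ (t : ℝ) (_ : 0 < t), ENNReal.ofReal t * (wInt n w {x | t < |g x|}) ^ (1 / p)

/-- The Morrey norm `‖f‖_{L^{p,λ}(u)} = sup_{x,r>0} (r^{-λ} ∫_{B(x,r)} |f|^p u)^{1/p}`. -/
def morreyNorm (n : ℕ) (p lam : ℝ) (u f : Euc n → ℝ) : ℝ≥0∞ :=
  ⨆ (x : Euc n) (r : ℝ) (_ : 0 < r),
    (ENNReal.ofReal (r ^ (-lam)) *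
      ∫⁻ y in ball x r, ENNReal.ofReal (|f y| ^ p * u y)) ^ (1 / p)

/-- The weak Morrey norm
`‖f‖_{WL^{p,λ}(u)} = sup_{x,r>0,t>0} (t^p u({y ∈ B(x,r) : |f y| > t}) / r^λ)^{1/p}`. -/
def weakMorreyNorm (n : ℕ) (p lam : ℝ) (u f : Euc n → ℝ) : ℝ≥0∞ :=
  ⨆ (x : Euc n) (r : ℝ) (_ : 0 < r) (t : ℝ) (_ : 0 < t),
    (ENNReal.ofReal (t ^ p) * ENNReal.ofReal (r ^ (-lam)) *
      wInt n u {y ∈ ball x r | t < |f y|}) ^ (1 / p)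

/-- The Hardy–Littlewood maximal function `Mf(x) = sup_{B ∋ x} |B|⁻¹ ∫_B |f|`. -/
def maximal (n : ℕ) (f : Euc n → ℝ) (x : Euc n) : ℝ≥0∞ :=
  ⨆ (z : Euc n) (r : ℝ) (_ : 0 < r) (_ : x ∈ ball z r),
    (volume (ball z r))⁻¹ * ∫⁻ y in ball z r, ENNReal.ofReal |f y|

/-- Morrey norm for an `ℝ≥0∞`-valued function (e.g. a maximal function). -/
def morreyNormE (n : ℕ) (p lam : ℝ) (u : Euc n → ℝ) (g : Euc n → ℝ≥0∞) : ℝ≥0∞ :=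
  ⨆ (x : Euc n) (r : ℝ) (_ : 0 < r),
    (ENNReal.ofReal (r ^ (-lam)) *
      ∫⁻ y in ball x r, (g y) ^ p * ENNReal.ofReal (u y)) ^ (1 / p)

/-- Weak Morrey norm for an `ℝ≥0∞`-valued function (e.g. a maximal function). -/
def weakMorreyNormE (n : ℕ) (p lam : ℝ) (u : Euc n → ℝ) (g : Euc n → ℝ≥0∞) : ℝ≥0∞ :=
  ⨆ (x : Euc n) (r : ℝ) (_ : 0 < r) (t : ℝ) (_ : 0 < t),
    (ENNReal.ofReal (t ^ p) * ENNReal.ofReal (r ^ (-lam)) *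
      wInt n u {y ∈ ball x r | ENNReal.ofReal t < g y}) ^ (1 / p)

end


section Aux11
open MeasureTheory Metric ENNReal NNReal

lemma cover_shell (n : ℕ) (z : Euc n) (hz : z ≠ 0) (hz1 : ‖z‖ < 1) :
    ∃ k : ℕ, (2⁻¹ : ℝ) ^ (k+1) ≤ ‖z‖ ∧ ‖z‖ < (2⁻¹ : ℝ) ^ k := by
  classical
  have hz0 : 0 < ‖z‖ := norm_pos_iff.mpr hz
  have hex : ∃ m : ℕ, (2⁻¹ : ℝ) ^ (m+1) ≤ ‖z‖ := by
    obtain ⟨m, hm⟩ := exists_pow_lt_of_lt_one hz0 (by norm_num : (2⁻¹:ℝ) < 1)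
    exact ⟨m, by
      calc (2⁻¹:ℝ) ^ (m+1) ≤ (2⁻¹:ℝ) ^ m := by
            apply pow_le_pow_of_le_one (by norm_num) (by norm_num) (Nat.le_succ m)
        _ ≤ ‖z‖ := hm.le⟩
  refine ⟨Nat.find hex, Nat.find_spec hex, ?_⟩
  rcases Nat.eq_zero_or_pos (Nat.find hex) with h0 | hpos
  · rw [h0, pow_zero]; exact hz1
  · have := Nat.find_min hex (m := Nat.find hex - 1) (by omega)
    push_neg at this
    calc ‖z‖ < (2⁻¹:ℝ) ^ (Nat.find hex - 1 + 1) := this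
      _ = (2⁻¹:ℝ) ^ (Nat.find hex) := by congr 1; omega

lemma pow_arith (n k : ℕ) (β : ℝ) :
    ((2⁻¹:ℝ) ^ (k+1)) ^ (-β) * ((2⁻¹:ℝ) ^ k) ^ n
      = (2:ℝ) ^ β * ((2:ℝ) ^ (β - (n:ℝ))) ^ k := by
  have h2 : ∀ (m : ℕ), ((2⁻¹:ℝ) ^ m) = (2:ℝ) ^ (-(m:ℝ)) := fun m => by
    rw [Real.rpow_neg (by norm_num), Real.rpow_natCast]
    simp
  rw [h2, h2, ← Real.rpow_natCast ((2:ℝ) ^ (-(k:ℝ))) n,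
    ← Real.rpow_natCast ((2:ℝ) ^ (β - (n:ℝ))) k,
    ← Real.rpow_mul (by norm_num), ← Real.rpow_mul (by norm_num),
    ← Real.rpow_mul (by norm_num), ← Real.rpow_add (by norm_num),
    ← Real.rpow_add (by norm_num)]
  congr 1
  push_cast
  ring

lemma unit_ball_finite (n : ℕ) (hn : 1 ≤ n) (β : ℝ) (hβ0 : 0 ≤ β) (hβ : β < n) :
    ∫⁻ y in ball (0 : Euc n) 1, ENNReal.ofReal (‖y‖ ^ (-β)) < ⊤ := by
  haveI : Nonempty (Fin n) := Fin.pos_iff_nonempty.mp hn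
  set V := volume (ball (0 : Euc n) 1) with hV
  have hVtop : V < ⊤ := measure_ball_lt_top
  set f : Euc n → ℝ≥0∞ := fun y => ENNReal.ofReal (‖y‖ ^ (-β)) with hf
  set s : ℕ → Set (Euc n) := fun k =>
    ball (0 : Euc n) ((2⁻¹:ℝ) ^ k) \ ball (0 : Euc n) ((2⁻¹:ℝ) ^ (k+1)) with hs
  have hsub : ball (0 : Euc n) 1 ⊆ {(0 : Euc n)} ∪ ⋃ k, s k := by
    intro z hz
    by_cases h0 : z = 0
    · exact Or.inl (by simp [h0])
    · obtain ⟨k, hk1, hk2⟩ := cover_shell n z h0 (by simpa using hz)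
      exact Or.inr (Set.mem_iUnion.mpr ⟨k, by
        simp only [hs, Set.mem_diff, mem_ball_zero_iff, not_lt]
        exact ⟨hk2, hk1⟩⟩)
  have key : ∫⁻ y in ball (0 : Euc n) 1, f y ≤
      (∫⁻ y in {(0 : Euc n)}, f y) + ∑' k, ∫⁻ y in s k, f y := by
    calc ∫⁻ y in ball (0 : Euc n) 1, f y ≤ ∫⁻ y in {(0:Euc n)} ∪ ⋃ k, s k, f y :=
          lintegral_mono_set hsub
      _ ≤ (∫⁻ y in {(0 : Euc n)}, f y) + ∫⁻ y in ⋃ k, s k, f y := lintegral_union_le _ _ _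
      _ ≤ _ := by gcongr; exact lintegral_iUnion_le _ _
  have h0 : ∫⁻ y in {(0 : Euc n)}, f y = 0 := by
    rw [Measure.restrict_eq_zero.mpr (measure_singleton _), lintegral_zero_measure]
  have hterm : ∀ k, ∫⁻ y in s k, f y ≤
      (ENNReal.ofReal ((2:ℝ) ^ β) * (ENNReal.ofReal ((2:ℝ) ^ (β - (n:ℝ)))) ^ k) * V := by
    intro k
    have hb : ∀ y ∈ s k, f y ≤ ENNReal.ofReal (((2⁻¹:ℝ) ^ (k+1)) ^ (-β)) := by
      intro y hy
      have h1 : (2⁻¹:ℝ) ^ (k+1) ≤ ‖y‖ := by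
        have := hy.2; rw [mem_ball_zero_iff, not_lt] at this; exact this
      apply ENNReal.ofReal_le_ofReal
      apply Real.rpow_le_rpow_of_nonpos (by positivity) h1 (by linarith)
    calc ∫⁻ y in s k, f y
        ≤ ∫⁻ _ in s k, ENNReal.ofReal (((2⁻¹:ℝ) ^ (k+1)) ^ (-β)) :=
          setLIntegral_mono' (measurableSet_ball.diff measurableSet_ball) hb
      _ = ENNReal.ofReal (((2⁻¹:ℝ) ^ (k+1)) ^ (-β)) * volume (s k) := by
          rw [setLIntegral_const]
      _ ≤ ENNReal.ofReal (((2⁻¹:ℝ) ^ (k+1)) ^ (-β)) * volume (ball (0:Euc n) ((2⁻¹:ℝ)^k)) := by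
          gcongr; exact Set.diff_subset
      _ = (ENNReal.ofReal ((2:ℝ) ^ β) * (ENNReal.ofReal ((2:ℝ) ^ (β - (n:ℝ)))) ^ k) * V := by
          rw [Measure.addHaar_ball volume _ (by positivity), finrank_euclideanSpace_fin,
            ← mul_assoc, ← ENNReal.ofReal_mul (by positivity), pow_arith,
            ENNReal.ofReal_mul (by positivity), ENNReal.ofReal_pow (by positivity)]
  have hq : ENNReal.ofReal ((2:ℝ) ^ (β - (n:ℝ))) < 1 := by
    rw [← ENNReal.ofReal_one]
    apply ENNReal.ofReal_lt_ofReal_iff_of_nonneg (by positivity) |>.mpr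
    exact Real.rpow_lt_one_of_one_lt_of_neg (by norm_num) (by
      have : (1:ℝ) ≤ (n:ℝ) := by exact_mod_cast hn
      linarith)
  have hsum : ∑' k, ∫⁻ y in s k, f y < ⊤ := by
    calc ∑' k, ∫⁻ y in s k, f y
        ≤ ∑' k, (ENNReal.ofReal ((2:ℝ) ^ β) * (ENNReal.ofReal ((2:ℝ) ^ (β - (n:ℝ)))) ^ k) * V :=
          ENNReal.tsum_le_tsum hterm
      _ = ENNReal.ofReal ((2:ℝ) ^ β) * V * ∑' k, (ENNReal.ofReal ((2:ℝ) ^ (β - (n:ℝ)))) ^ k := by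
          rw [← ENNReal.tsum_mul_left]; congr 1; ext k; ring
      _ < ⊤ := by
          rw [ENNReal.tsum_geometric]
          apply ENNReal.mul_lt_top (ENNReal.mul_lt_top ENNReal.ofReal_lt_top hVtop)
          simp only [lt_top_iff_ne_top, ne_eq, ENNReal.inv_eq_top]
          intro hcontra
          rw [tsub_eq_zero_iff_le] at hcontra
          exact absurd hcontra (not_le.mpr hq)
  calc ∫⁻ y in ball (0 : Euc n) 1, f y ≤ _ := key
    _ < ⊤ := by rw [h0, zero_add]; exact hsum

lemma meas_f (n : ℕ) (β : ℝ) : Measurable (fun y : Euc n => ENNReal.ofReal (‖y‖ ^ (-β))) := by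
  fun_prop

lemma scale_int (n : ℕ) (hn : 1 ≤ n) (β : ℝ) (R : ℝ) (hR : 0 < R) :
    ∫⁻ y in ball (0 : Euc n) R, ENNReal.ofReal (‖y‖ ^ (-β))
      = ENNReal.ofReal (R ^ n) * (ENNReal.ofReal (R ^ (-β)) *
        ∫⁻ y in ball (0 : Euc n) 1, ENNReal.ofReal (‖y‖ ^ (-β))) := by
  haveI : Nonempty (Fin n) := Fin.pos_iff_nonempty.mp hn
  set f : Euc n → ℝ≥0∞ := fun y => ENNReal.ofReal (‖y‖ ^ (-β)) with hf
  have hmap : Measure.map (fun z : Euc n => R • z) volume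
      = ENNReal.ofReal ((R ^ n)⁻¹) • volume := by
    rw [Measure.map_addHaar_smul volume hR.ne', finrank_euclideanSpace_fin,
      abs_of_pos (by positivity)]
  have hpre : (fun z : Euc n => R • z) ⁻¹' (ball (0 : Euc n) R) = ball (0 : Euc n) 1 := by
    ext z
    simp only [Set.mem_preimage, mem_ball_zero_iff, norm_smul, Real.norm_eq_abs,
      abs_of_pos hR]
    constructor
    · intro h; nlinarith
    · intro h; nlinarith
  have hcomp : ∀ z : Euc n, f (R • z) = ENNReal.ofReal (R ^ (-β)) * f z := by
    intro z
    simp only [hf, norm_smul, Real.norm_eq_abs, abs_of_pos hR]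
    rw [Real.mul_rpow hR.le (norm_nonneg z), ENNReal.ofReal_mul (by positivity)]
  have h1 : ∫⁻ y in ball (0 : Euc n) R, f y ∂(Measure.map (fun z : Euc n => R • z) volume)
      = ∫⁻ z in ball (0 : Euc n) 1, f (R • z) := by
    rw [setLIntegral_map measurableSet_ball (meas_f n β) (measurable_const_smul R), hpre]
  rw [hmap, Measure.restrict_smul, lintegral_smul_measure] at h1
  have h2 : ∫⁻ z in ball (0 : Euc n) 1, f (R • z)
      = ENNReal.ofReal (R ^ (-β)) * ∫⁻ z in ball (0 : Euc n) 1, f z := by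
    rw [← lintegral_const_mul' _ _ ENNReal.ofReal_ne_top]
    congr 1; ext z; exact hcomp z
  have ha : ENNReal.ofReal ((R ^ n)⁻¹) = (ENNReal.ofReal (R ^ n))⁻¹ :=
    ENNReal.ofReal_inv_of_pos (by positivity)
  rw [h2, ha] at h1
  have hane : ENNReal.ofReal (R ^ n) ≠ 0 := by
    simp [ENNReal.ofReal_eq_zero, not_le]; positivity
  calc ∫⁻ y in ball (0 : Euc n) R, f y
      = ENNReal.ofReal (R ^ n) * ((ENNReal.ofReal (R ^ n))⁻¹ *
          ∫⁻ y in ball (0 : Euc n) R, f y) := by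
        rw [← mul_assoc, ENNReal.mul_inv_cancel hane ENNReal.ofReal_ne_top, one_mul]
    _ = _ := by simp only [smul_eq_mul] at h1; rw [h1]

lemma power_bound (n : ℕ) (hn : 1 ≤ n) (β : ℝ) (hβ0 : 0 ≤ β) (hβ : β < n) :
    ∃ C : ℝ≥0∞, C ≠ ⊤ ∧ ∀ (x₀ : Euc n) (r : ℝ), 0 < r →
      ENNReal.ofReal ((‖x₀‖ + r) ^ β) * ∫⁻ y in ball x₀ r, ENNReal.ofReal (‖y‖ ^ (-β))
        ≤ C * volume (ball x₀ r) := by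
  haveI : Nonempty (Fin n) := Fin.pos_iff_nonempty.mp hn
  set I1 := ∫⁻ y in ball (0 : Euc n) 1, ENNReal.ofReal (‖y‖ ^ (-β)) with hI1
  set V := volume (ball (0 : Euc n) 1) with hV
  have hVpos : 0 < V := measure_ball_pos _ _ one_pos
  have hVtop : V < ⊤ := measure_ball_lt_top
  refine ⟨ENNReal.ofReal (3 ^ (n : ℝ)) * I1 * V⁻¹ + ENNReal.ofReal (3 ^ β), ?_, ?_⟩
  · apply ENNReal.add_ne_top.mpr
    exact ⟨(ENNReal.mul_lt_top (ENNReal.mul_lt_top ENNReal.ofReal_lt_top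
        (unit_ball_finite n hn β hβ0 hβ)) (ENNReal.inv_lt_top.mpr hVpos)).ne,
      ENNReal.ofReal_ne_top⟩
  intro x₀ r hr
  have hvol : volume (ball x₀ r) = ENNReal.ofReal (r ^ n) * V := by
    rw [hV, Measure.addHaar_ball volume x₀ hr.le, finrank_euclideanSpace_fin]
  by_cases hcase : ‖x₀‖ ≤ 2 * r
  · have hsub : ball x₀ r ⊆ ball (0 : Euc n) (3 * r) := by
      intro y hy
      rw [mem_ball_zero_iff]
      calc ‖y‖ = ‖x₀ + (y - x₀)‖ := by rw [add_sub_cancel]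
        _ ≤ ‖x₀‖ + ‖y - x₀‖ := norm_add_le _ _
        _ < 2 * r + r := add_lt_add_of_le_of_lt hcase (mem_ball_iff_norm.mp hy)
        _ = 3 * r := by ring
    have h3r : (0:ℝ) < 3 * r := by linarith
    have key : ENNReal.ofReal ((3 * r) ^ n) * I1
        = (ENNReal.ofReal (3 ^ (n : ℝ)) * I1 * V⁻¹) * (ENNReal.ofReal (r ^ n) * V) := by
      have hc : V⁻¹ * V = 1 := ENNReal.inv_mul_cancel hVpos.ne' hVtop.ne
      calc ENNReal.ofReal ((3 * r) ^ n) * I1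
          = ENNReal.ofReal (3 ^ (n:ℝ)) * ENNReal.ofReal (r ^ n) * I1 := by
            rw [mul_pow, ENNReal.ofReal_mul (by positivity), Real.rpow_natCast]
        _ = ENNReal.ofReal (3 ^ (n:ℝ)) * ENNReal.ofReal (r ^ n) * I1 * (V⁻¹ * V) := by
            rw [hc, mul_one]
        _ = _ := by ring
    calc ENNReal.ofReal ((‖x₀‖ + r) ^ β) * ∫⁻ y in ball x₀ r, ENNReal.ofReal (‖y‖ ^ (-β))
        ≤ ENNReal.ofReal ((3 * r) ^ β) * ∫⁻ y in ball (0 : Euc n) (3 * r),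
            ENNReal.ofReal (‖y‖ ^ (-β)) :=
          mul_le_mul' (ENNReal.ofReal_le_ofReal
              (Real.rpow_le_rpow (by positivity) (by linarith) hβ0))
            (lintegral_mono_set hsub)
      _ = ENNReal.ofReal ((3 * r) ^ β) * (ENNReal.ofReal ((3 * r) ^ n) *
            (ENNReal.ofReal ((3 * r) ^ (-β)) * I1)) := by rw [scale_int n hn β _ h3r]
      _ = ENNReal.ofReal ((3 * r) ^ β * (3 * r) ^ (-β)) * (ENNReal.ofReal ((3 * r) ^ n) * I1) := by
          rw [ENNReal.ofReal_mul (by positivity)]; ring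
      _ = ENNReal.ofReal ((3 * r) ^ n) * I1 := by
          rw [← Real.rpow_add h3r, add_neg_cancel, Real.rpow_zero, ENNReal.ofReal_one, one_mul]
      _ = (ENNReal.ofReal (3 ^ (n : ℝ)) * I1 * V⁻¹) * (ENNReal.ofReal (r ^ n) * V) := key
      _ ≤ (ENNReal.ofReal (3 ^ (n : ℝ)) * I1 * V⁻¹ + ENNReal.ofReal (3 ^ β)) *
            volume (ball x₀ r) := by
          rw [hvol]; exact mul_le_mul' le_self_add le_rfl
  · push_neg at hcase
    have hlow : ∀ y ∈ ball x₀ r, (‖x₀‖ + r) / 3 ≤ ‖y‖ := by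
      intro y hy
      have h1 : ‖x₀ - y‖ < r := mem_ball_iff_norm'.mp hy
      have h2 : ‖x₀‖ ≤ ‖y‖ + ‖x₀ - y‖ := by
        calc ‖x₀‖ = ‖y + (x₀ - y)‖ := by rw [add_sub_cancel]
          _ ≤ ‖y‖ + ‖x₀ - y‖ := norm_add_le _ _
      linarith
    have hpos3 : (0:ℝ) < (‖x₀‖ + r) / 3 := by positivity
    calc ENNReal.ofReal ((‖x₀‖ + r) ^ β) * ∫⁻ y in ball x₀ r, ENNReal.ofReal (‖y‖ ^ (-β))
        ≤ ENNReal.ofReal ((‖x₀‖ + r) ^ β) *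
            ∫⁻ _ in ball x₀ r, ENNReal.ofReal (((‖x₀‖ + r) / 3) ^ (-β)) := by
          apply mul_le_mul' le_rfl
          apply setLIntegral_mono' measurableSet_ball
          intro y hy
          exact ENNReal.ofReal_le_ofReal
            (Real.rpow_le_rpow_of_nonpos hpos3 (hlow y hy) (by linarith))
      _ = ENNReal.ofReal ((‖x₀‖ + r) ^ β * ((‖x₀‖ + r) / 3) ^ (-β)) * volume (ball x₀ r) := by
          rw [setLIntegral_const, ENNReal.ofReal_mul (by positivity)]; ring
      _ ≤ (ENNReal.ofReal (3 ^ (n : ℝ)) * I1 * V⁻¹ + ENNReal.ofReal (3 ^ β)) *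
            volume (ball x₀ r) := by
          apply mul_le_mul' _ le_rfl
          refine le_trans ?_ le_add_self
          apply ENNReal.ofReal_le_ofReal
          rw [Real.div_rpow (by positivity) (by norm_num), Real.rpow_neg (by positivity),
            Real.rpow_neg (by norm_num : (0:ℝ) ≤ 3)]
          rw [show ((‖x₀‖ + r) ^ β)⁻¹ / ((3:ℝ) ^ β)⁻¹ = ((‖x₀‖ + r) ^ β)⁻¹ * 3 ^ β by
            field_simp, ← mul_assoc, mul_inv_cancel₀ (by positivity), one_mul]

lemma aux11_one_sub (x : ℝ) (hx : x - 1 ≠ 0) : 1 - x/(x-1) = -(1/(x-1)) := by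
  field_simp
  ring

lemma aux11_f1 (x y : ℝ) (hx : x ≠ 0) : -(1/x) * (x/y) = -(1/y) := by
  rcases eq_or_ne y 0 with h | h
  · simp [h]
  · field_simp

lemma aux11_f2 (a x d : ℝ) (hx : x ≠ 0) (hd : d ≠ 0) : a * -(1/x) * (x/d) = -(a/d) := by
  field_simp

lemma aux11_f3 (x y : ℝ) (hx : x ≠ 0) : (1/(x/y)) * x = y := by
  rcases eq_or_ne y 0 with h | h
  · simp [h]
  · field_simp

lemma aux11_inv_bound {a b x : ℝ≥0∞} (ha0 : a ≠ 0) (hatop : a ≠ ⊤) (h : a ≤ b * x) :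
    x⁻¹ ≤ b * a⁻¹ := by
  calc x⁻¹ = (a⁻¹ * a) * x⁻¹ := by rw [ENNReal.inv_mul_cancel ha0 hatop, one_mul]
    _ ≤ a⁻¹ * (b * x) * x⁻¹ := by gcongr
    _ = b * a⁻¹ * (x * x⁻¹) := by ring
    _ ≤ b * a⁻¹ * 1 := by gcongr; exact ENNReal.mul_inv_le_one x
    _ = b * a⁻¹ := mul_one _

/-- a priori bound for `wInt` of `‖·‖^α * w` on a ball. -/
lemma aux11_first (n : ℕ) (α : ℝ) (hα0 : 0 ≤ α) (w : Euc n → ℝ) (hw0 : ∀ x, 0 ≤ w x)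
    (x₀ : Euc n) (r : ℝ) (hr : 0 < r) :
    wInt n (fun x => ‖x‖ ^ α * w x) (ball x₀ r)
      ≤ ENNReal.ofReal ((‖x₀‖ + r) ^ α) * wInt n w (ball x₀ r) := by
  unfold wInt
  rw [← lintegral_const_mul' _ _ ENNReal.ofReal_ne_top]
  apply setLIntegral_mono' measurableSet_ball
  intro y hy
  have hy' : ‖y‖ ≤ ‖x₀‖ + r := by
    have h1 : ‖y - x₀‖ < r := mem_ball_iff_norm.mp hy
    have : ‖y‖ ≤ ‖x₀‖ + ‖y - x₀‖ := by
      calc ‖y‖ = ‖x₀ + (y - x₀)‖ := by rw [add_sub_cancel]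
        _ ≤ ‖x₀‖ + ‖y - x₀‖ := norm_add_le _ _
    linarith
  rw [← ENNReal.ofReal_mul (by positivity)]
  exact ENNReal.ofReal_le_ofReal
    (mul_le_mul_of_nonneg_right (Real.rpow_le_rpow (norm_nonneg y) hy' hα0) (hw0 y))

theorem statement11 (n : ℕ) (hn : 1 ≤ n) (p lam α : ℝ) (hp : 1 ≤ p)
    (hlam0 : 0 ≤ lam) (hlam : lam < (n : ℝ)) (hα0 : 0 ≤ α) (hα : α < lam)
    (w : Euc n → ℝ) (hw : IsWeight n w) (hwAp : MemAp n p w) :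
    MemAp n (p + lam / n) (fun x => ‖x‖ ^ α * w x) := by
  have hn1 : (1:ℝ) ≤ n := by exact_mod_cast hn
  have hnpos : (0:ℝ) < n := by linarith
  have hlamp : 0 < lam := lt_of_le_of_lt hα0 hα
  set q := p + lam / n with hqdef
  set δ := lam / n with hδdef
  have hδ0 : 0 < δ := by positivity
  have hδ1 : δ < 1 := (div_lt_one hnpos).mpr hlam
  have hq1 : 1 < q := by rw [hqdef]; linarith
  have hqm1 : 0 < q - 1 := by linarith
  have hq_sub : q - 1 = p - 1 + δ := by rw [hqdef]; ring
  set β := α / δ with hβdef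
  have hβ0 : 0 ≤ β := by positivity
  have hβn : β < n := by
    rw [hβdef]
    rw [div_lt_iff₀ hδ0]
    have : (n:ℝ) * δ = lam := by rw [hδdef]; field_simp
    linarith [this]
  have hαβ : α = β * δ := by rw [hβdef]; field_simp
  obtain ⟨C, hCtop, hC⟩ := power_bound n hn β hβ0 hβn
  set v := fun x : Euc n => ‖x‖ ^ α * w x with hvdef
  have hv0 : ∀ x, 0 ≤ v x := fun x => mul_nonneg (by positivity) (hw.1 x)
  have he : 1 - q / (q - 1) = -(1/(q-1)) := by field_simp; ring
  have hwm : AEMeasurable w volume := hw.2.aestronglyMeasurable.aemeasurable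
  -- second-factor geometric bound
  have hsecond : ∀ (x₀ : Euc n) (r : ℝ), 0 < r →
      ENNReal.ofReal ((‖x₀‖ + r) ^ α) *
        ((∫⁻ y in ball x₀ r, ENNReal.ofReal (‖y‖ ^ (-β))) * (volume (ball x₀ r))⁻¹) ^ δ
          ≤ C ^ δ := by
    intro x₀ r hr
    have h2 : ENNReal.ofReal ((‖x₀‖ + r) ^ α) = (ENNReal.ofReal ((‖x₀‖ + r) ^ β)) ^ δ := by
      rw [hαβ, Real.rpow_mul (by positivity), ENNReal.ofReal_rpow_of_nonneg (by positivity) hδ0.le]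
    rw [h2, ← ENNReal.mul_rpow_of_nonneg _ _ hδ0.le]
    apply ENNReal.rpow_le_rpow _ hδ0.le
    calc ENNReal.ofReal ((‖x₀‖ + r) ^ β) *
          ((∫⁻ y in ball x₀ r, ENNReal.ofReal (‖y‖ ^ (-β))) * (volume (ball x₀ r))⁻¹)
        = (ENNReal.ofReal ((‖x₀‖ + r) ^ β) *
            ∫⁻ y in ball x₀ r, ENNReal.ofReal (‖y‖ ^ (-β))) * (volume (ball x₀ r))⁻¹ := by ring
      _ ≤ (C * volume (ball x₀ r)) * (volume (ball x₀ r))⁻¹ := mul_le_mul' (hC x₀ r hr) le_rfl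
      _ = C * (volume (ball x₀ r) * (volume (ball x₀ r))⁻¹) := by ring
      _ ≤ C * 1 := by gcongr; exact ENNReal.mul_inv_le_one _
      _ = C := mul_one C
  -- pointwise splitting of the dual weight
  have hsplit : ∀ y : Euc n, ENNReal.ofReal (v y ^ (1 - q / (q - 1)))
      = ENNReal.ofReal (w y ^ (1 - q / (q - 1))) *
          ENNReal.ofReal (‖y‖ ^ (α * (1 - q / (q - 1)))) := by
    intro y
    rw [hvdef]
    simp only
    rw [Real.mul_rpow (by positivity) (hw.1 y), ← Real.rpow_mul (norm_nonneg y),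
      mul_comm ((‖y‖:ℝ) ^ (α * (1 - q/(q-1)))) _,
      ENNReal.ofReal_mul (Real.rpow_nonneg (hw.1 y) _)]
  -- facts about balls
  have heδ : ∀ x : ℝ, x - x/(x-1) = -(1/(x-1)) ∨ True := fun _ => Or.inr trivial
  have hvolpos : ∀ (x₀ : Euc n) (r : ℝ), 0 < r → volume (ball x₀ r) ≠ 0 :=
    fun x₀ r hr => (measure_ball_pos _ _ hr).ne'
  have hvoltop : ∀ (x₀ : Euc n) (r : ℝ), volume (ball x₀ r) ≠ ⊤ :=
    fun x₀ r => measure_ball_lt_top.ne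
  have hwfin : ∀ (x₀ : Euc n) (r : ℝ), wInt n w (ball x₀ r) ≠ ⊤ := by
    intro x₀ r
    have hint : IntegrableOn w (closedBall x₀ r) volume :=
      hw.2.integrableOn_isCompact (isCompact_closedBall x₀ r)
    have h2 : wInt n w (closedBall x₀ r) < ⊤ := hint.lintegral_lt_top
    exact (lt_of_le_of_lt (lintegral_mono_set ball_subset_closedBall) h2).ne
  by_cases hp1 : p = 1
  · -- case p = 1
    subst hp1
    have hqd : q - 1 = δ := by rw [hq_sub]; ring
    have heδ2 : 1 - q / (q - 1) = -(1/δ) := by rw [he, hqd]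
    have hαE : α * (1 - q / (q - 1)) = -β := by rw [heδ2, hβdef]; ring
    unfold MemAp muckConst at hwAp ⊢
    rw [if_pos rfl] at hwAp
    rw [if_neg hq1.ne']
    unfold A1Const at hwAp
    obtain ⟨c, hcmem, hctop⟩ := sInf_lt_iff.mp hwAp
    simp only [Set.mem_setOf_eq] at hcmem
    have hKtop : c * C ^ δ < ⊤ :=
      ENNReal.mul_lt_top hctop (ENNReal.rpow_lt_top_of_nonneg hδ0.le hCtop)
    refine lt_of_le_of_lt (iSup_le fun x₀ => iSup_le fun r => iSup_le fun hr => ?_) hKtop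
    simp only [div_eq_mul_inv]
    by_cases hm0 : wInt n w (ball x₀ r) = 0
    · have h1 : wInt n v (ball x₀ r) = 0 := by
        have h2 := aux11_first n α hα0 w hw.1 x₀ r hr
        rw [hm0, mul_zero] at h2
        exact le_zero_iff.mp h2
      rw [h1, zero_mul, zero_mul]
      exact zero_le
    · have hmtop : wInt n w (ball x₀ r) ≠ ⊤ := hwfin x₀ r
      have hiv0 : (volume (ball x₀ r))⁻¹ ≠ 0 := ENNReal.inv_ne_zero.mpr (hvoltop x₀ r)
      have hivtop : (volume (ball x₀ r))⁻¹ ≠ ⊤ := ENNReal.inv_ne_top.mpr (hvolpos x₀ r hr)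
      set μ₀ := wInt n w (ball x₀ r) * (volume (ball x₀ r))⁻¹ with hμ₀
      have hμ0 : μ₀ ≠ 0 := mul_ne_zero hm0 hiv0
      have hμtop : μ₀ ≠ ⊤ := ENNReal.mul_ne_top hmtop hivtop
      have ha0 : μ₀ ^ (1/δ) ≠ 0 :=
        (ENNReal.rpow_pos (zero_lt_iff.mpr hμ0) hμtop).ne'
      have hatop : μ₀ ^ (1/δ) ≠ ⊤ := ENNReal.rpow_ne_top_of_nonneg (by positivity) hμtop
      have hae := hcmem x₀ r hr
      have hptw : ∀ᵐ y ∂(volume.restrict (ball x₀ r)),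
          ENNReal.ofReal (w y ^ (1 - q / (q - 1))) ≤ c ^ (1/δ) * (μ₀ ^ (1/δ))⁻¹ := by
        filter_upwards [hae] with y hy
        rw [heδ2]
        rcases eq_or_lt_of_le (hw.1 y) with h0 | hwy
        · rw [← h0, Real.zero_rpow (neg_ne_zero.mpr (by positivity)), ENNReal.ofReal_zero]
          exact zero_le
        · rw [← ENNReal.ofReal_rpow_of_pos hwy, ENNReal.rpow_neg]
          apply aux11_inv_bound ha0 hatop
          have hy' : μ₀ ≤ c * ENNReal.ofReal (w y) := by
            rw [hμ₀, ← div_eq_mul_inv]; exact hy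
          calc μ₀ ^ (1/δ) ≤ (c * ENNReal.ofReal (w y)) ^ (1/δ) :=
                ENNReal.rpow_le_rpow hy' (by positivity)
            _ = c ^ (1/δ) * (ENNReal.ofReal (w y)) ^ (1/δ) :=
                ENNReal.mul_rpow_of_nonneg _ _ (by positivity)
      have hDtop : c ^ (1/δ) * (μ₀ ^ (1/δ))⁻¹ ≠ ⊤ :=
        ENNReal.mul_ne_top (ENNReal.rpow_ne_top_of_nonneg (by positivity) hctop.ne)
          (ENNReal.inv_ne_top.mpr ha0)
      have hdual : wInt n (fun y => v y ^ (1 - q / (q - 1))) (ball x₀ r)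
          ≤ (c ^ (1/δ) * (μ₀ ^ (1/δ))⁻¹) *
              ∫⁻ y in ball x₀ r, ENNReal.ofReal (‖y‖ ^ (-β)) := by
        unfold wInt
        rw [← lintegral_const_mul' _ _ hDtop]
        apply lintegral_mono_ae
        filter_upwards [hptw] with y hy
        rw [hsplit y, hαE]
        exact mul_le_mul' hy le_rfl
      have hfirst := aux11_first n α hα0 w hw.1 x₀ r hr
      have h1δ : (1/δ) * (q - 1) = 1 := by rw [hqd]; field_simp
      calc wInt n v (ball x₀ r) * (volume (ball x₀ r))⁻¹ *
            (wInt n (fun y => v y ^ (1 - q / (q - 1))) (ball x₀ r) *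
              (volume (ball x₀ r))⁻¹) ^ (q - 1)
          ≤ (ENNReal.ofReal ((‖x₀‖ + r) ^ α) * wInt n w (ball x₀ r) *
              (volume (ball x₀ r))⁻¹) *
            ((c ^ (1/δ) * (μ₀ ^ (1/δ))⁻¹ *
                (∫⁻ y in ball x₀ r, ENNReal.ofReal (‖y‖ ^ (-β)))) *
              (volume (ball x₀ r))⁻¹) ^ (q - 1) := by
            apply mul_le_mul'
            · exact mul_le_mul' hfirst le_rfl
            · exact ENNReal.rpow_le_rpow (mul_le_mul' hdual le_rfl) hqm1.le
        _ = (ENNReal.ofReal ((‖x₀‖ + r) ^ α) * wInt n w (ball x₀ r) *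
              (volume (ball x₀ r))⁻¹) *
            ((c ^ (1/δ)) ^ (q-1) * ((μ₀ ^ (1/δ))⁻¹) ^ (q-1) *
              ((∫⁻ y in ball x₀ r, ENNReal.ofReal (‖y‖ ^ (-β))) *
                (volume (ball x₀ r))⁻¹) ^ (q-1)) := by
            rw [show (c ^ (1/δ) * (μ₀ ^ (1/δ))⁻¹ *
                (∫⁻ y in ball x₀ r, ENNReal.ofReal (‖y‖ ^ (-β)))) *
                (volume (ball x₀ r))⁻¹
              = (c ^ (1/δ)) * ((μ₀ ^ (1/δ))⁻¹) *
                ((∫⁻ y in ball x₀ r, ENNReal.ofReal (‖y‖ ^ (-β))) *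
                  (volume (ball x₀ r))⁻¹) from by ring,
              ENNReal.mul_rpow_of_nonneg _ _ hqm1.le,
              ENNReal.mul_rpow_of_nonneg _ _ hqm1.le]
        _ = (ENNReal.ofReal ((‖x₀‖ + r) ^ α) * wInt n w (ball x₀ r) *
              (volume (ball x₀ r))⁻¹) *
            (c * μ₀⁻¹ *
              ((∫⁻ y in ball x₀ r, ENNReal.ofReal (‖y‖ ^ (-β))) *
                (volume (ball x₀ r))⁻¹) ^ (q-1)) := by
            rw [← ENNReal.rpow_mul c, h1δ, ENNReal.rpow_one,
              ENNReal.inv_rpow, ← ENNReal.rpow_mul μ₀, h1δ, ENNReal.rpow_one]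
        _ = (c * (μ₀ * μ₀⁻¹)) *
            (ENNReal.ofReal ((‖x₀‖ + r) ^ α) *
              ((∫⁻ y in ball x₀ r, ENNReal.ofReal (‖y‖ ^ (-β))) *
                (volume (ball x₀ r))⁻¹) ^ (q-1)) := by
            rw [hμ₀]; ring
        _ ≤ (c * 1) * (C ^ δ) := by
            apply mul_le_mul'
            · exact mul_le_mul' le_rfl (ENNReal.mul_inv_le_one _)
            · rw [hqd]; exact hsecond x₀ r hr
        _ = c * C ^ δ := by rw [mul_one]
  · -- case p > 1
    have hpgt : 1 < p := lt_of_le_of_ne hp (Ne.symm hp1)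
    have hpm1 : 0 < p - 1 := by linarith
    unfold MemAp muckConst at hwAp ⊢
    rw [if_neg hp1] at hwAp
    rw [if_neg hq1.ne']
    set s := (q-1)/(p-1) with hsdef
    set s' := (q-1)/δ with hs'def
    have hs1 : 1 < s := by
      rw [hsdef]; rw [lt_div_iff₀ hpm1]; rw [hq_sub]; linarith
    have hs'0 : 0 < s' := by rw [hs'def]; positivity
    have hconj : Real.HolderConjugate s s' := by
      rw [Real.holderConjugate_iff]; constructor
      · exact hs1
      · rw [hsdef, hs'def, inv_div, inv_div, ← add_div, ← hq_sub,
          div_self hqm1.ne']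
    have hep : 1 - p/(p-1) = -(1/(p-1)) := aux11_one_sub p (by linarith)
    have hEs : (1 - q/(q-1)) * s = 1 - p/(p-1) := by
      rw [he, hep, hsdef]; exact aux11_f1 _ _ hqm1.ne'
    have hEs' : α * (1 - q/(q-1)) * s' = -β := by
      rw [he, hs'def, hβdef]; exact aux11_f2 _ _ _ hqm1.ne' hδ0.ne'
    have hinv_s : (1/s) * (q - 1) = p - 1 := by
      rw [hsdef]; exact aux11_f3 _ _ hqm1.ne'
    have hinv_s' : (1/s') * (q - 1) = δ := by
      rw [hs'def]; exact aux11_f3 _ _ hqm1.ne'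
    have hspos : (0:ℝ) < s := lt_trans zero_lt_one hs1
    have hKball : ∀ (x₀ : Euc n) (r : ℝ), 0 < r →
        (wInt n w (ball x₀ r) * (volume (ball x₀ r))⁻¹) *
          (wInt n (fun y => w y ^ (1 - p / (p - 1))) (ball x₀ r) *
            (volume (ball x₀ r))⁻¹) ^ (p - 1) ≤ ApConst n p w := by
      intro x₀ r hr
      unfold ApConst
      simp only [div_eq_mul_inv]
      exact le_iSup_of_le x₀ (le_iSup_of_le r (le_iSup_of_le hr le_rfl))
    have hKtop : ApConst n p w * C ^ δ < ⊤ :=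
      ENNReal.mul_lt_top hwAp (ENNReal.rpow_lt_top_of_nonneg hδ0.le hCtop)
    refine lt_of_le_of_lt (iSup_le fun x₀ => iSup_le fun r => iSup_le fun hr => ?_) hKtop
    simp only [div_eq_mul_inv]
    -- Hölder
    have hf : AEMeasurable (fun y => ENNReal.ofReal (w y ^ (1 - q/(q-1))))
        (volume.restrict (ball x₀ r)) := by
      have mo : Measurable fun t : ℝ => ENNReal.ofReal (t ^ (1 - q/(q-1))) := by fun_prop
      exact mo.comp_aemeasurable hwm.restrict
    have hg : AEMeasurable (fun y : Euc n => ENNReal.ofReal (‖y‖ ^ (α * (1 - q/(q-1)))))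
        (volume.restrict (ball x₀ r)) :=
      (by fun_prop : Measurable fun y : Euc n =>
        ENNReal.ofReal (‖y‖ ^ (α * (1 - q/(q-1))))).aemeasurable
    have hHold := ENNReal.lintegral_mul_le_Lp_mul_Lq (volume.restrict (ball x₀ r))
      hconj hf hg
    simp only [Pi.mul_apply] at hHold
    have hid1 : wInt n (fun y => v y ^ (1 - q / (q - 1))) (ball x₀ r)
        = ∫⁻ y in ball x₀ r, ENNReal.ofReal (w y ^ (1 - q/(q-1))) *
            ENNReal.ofReal (‖y‖ ^ (α * (1 - q/(q-1)))) := by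
      unfold wInt
      exact lintegral_congr fun y => hsplit y
    have hid2 : ∫⁻ y in ball x₀ r, (ENNReal.ofReal (w y ^ (1 - q/(q-1)))) ^ s
        = wInt n (fun y => w y ^ (1 - p / (p - 1))) (ball x₀ r) := by
      unfold wInt
      apply lintegral_congr
      intro y
      rw [ENNReal.ofReal_rpow_of_nonneg (Real.rpow_nonneg (hw.1 y) _) (by linarith),
        ← Real.rpow_mul (hw.1 y), hEs]
    have hid3 : ∫⁻ y in ball x₀ r, (ENNReal.ofReal (‖y‖ ^ (α * (1 - q/(q-1))))) ^ s'
        = ∫⁻ y in ball x₀ r, ENNReal.ofReal (‖y‖ ^ (-β)) := by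
      apply lintegral_congr
      intro y
      rw [ENNReal.ofReal_rpow_of_nonneg (Real.rpow_nonneg (norm_nonneg y) _) hs'0.le,
        ← Real.rpow_mul (norm_nonneg y), hEs']
    rw [hid2, hid3] at hHold
    have hdual : wInt n (fun y => v y ^ (1 - q / (q - 1))) (ball x₀ r)
        ≤ (wInt n (fun y => w y ^ (1 - p / (p - 1))) (ball x₀ r)) ^ (1/s) *
            (∫⁻ y in ball x₀ r, ENNReal.ofReal (‖y‖ ^ (-β))) ^ (1/s') := by
      rw [hid1]; exact hHold
    have hfirst := aux11_first n α hα0 w hw.1 x₀ r hr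
    have hvsplit : (volume (ball x₀ r))⁻¹
        = ((volume (ball x₀ r))⁻¹) ^ (1/s) * ((volume (ball x₀ r))⁻¹) ^ (1/s') := by
      rw [← ENNReal.rpow_add _ _ (ENNReal.inv_ne_zero.mpr (hvoltop x₀ r))
        (ENNReal.inv_ne_top.mpr (hvolpos x₀ r hr))]
      rw [show 1/s + 1/s' = s⁻¹ + s'⁻¹ from by rw [one_div, one_div],
        hconj.inv_add_inv_eq_one, ENNReal.rpow_one]
    calc wInt n v (ball x₀ r) * (volume (ball x₀ r))⁻¹ *
          (wInt n (fun y => v y ^ (1 - q / (q - 1))) (ball x₀ r) *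
            (volume (ball x₀ r))⁻¹) ^ (q - 1)
        ≤ (ENNReal.ofReal ((‖x₀‖ + r) ^ α) * wInt n w (ball x₀ r) *
            (volume (ball x₀ r))⁻¹) *
          (((wInt n (fun y => w y ^ (1 - p / (p - 1))) (ball x₀ r)) ^ (1/s) *
              (∫⁻ y in ball x₀ r, ENNReal.ofReal (‖y‖ ^ (-β))) ^ (1/s')) *
            (volume (ball x₀ r))⁻¹) ^ (q - 1) := by
          apply mul_le_mul'
          · exact mul_le_mul' hfirst le_rfl
          · exact ENNReal.rpow_le_rpow (mul_le_mul' hdual le_rfl) hqm1.le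
      _ = (ENNReal.ofReal ((‖x₀‖ + r) ^ α) * wInt n w (ball x₀ r) *
            (volume (ball x₀ r))⁻¹) *
          (((wInt n (fun y => w y ^ (1 - p / (p - 1))) (ball x₀ r) *
              (volume (ball x₀ r))⁻¹) ^ (1/s) *
            ((∫⁻ y in ball x₀ r, ENNReal.ofReal (‖y‖ ^ (-β))) *
              (volume (ball x₀ r))⁻¹) ^ (1/s')) ^ (q - 1)) := by
          have hbase : (wInt n (fun y => w y ^ (1 - p / (p - 1))) (ball x₀ r)) ^ (1/s) *
                (∫⁻ y in ball x₀ r, ENNReal.ofReal (‖y‖ ^ (-β))) ^ (1/s') *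
                (volume (ball x₀ r))⁻¹
              = (wInt n (fun y => w y ^ (1 - p / (p - 1))) (ball x₀ r) *
                  (volume (ball x₀ r))⁻¹) ^ (1/s) *
                ((∫⁻ y in ball x₀ r, ENNReal.ofReal (‖y‖ ^ (-β))) *
                  (volume (ball x₀ r))⁻¹) ^ (1/s') := by
            rw [ENNReal.mul_rpow_of_nonneg _ _ (le_of_lt (one_div_pos.mpr hspos)),
              ENNReal.mul_rpow_of_nonneg _ _ (le_of_lt (one_div_pos.mpr hs'0))]
            nth_rewrite 1 [hvsplit]
            ring
          rw [hbase]
      _ = (ENNReal.ofReal ((‖x₀‖ + r) ^ α) * wInt n w (ball x₀ r) *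
            (volume (ball x₀ r))⁻¹) *
          ((wInt n (fun y => w y ^ (1 - p / (p - 1))) (ball x₀ r) *
              (volume (ball x₀ r))⁻¹) ^ (p - 1) *
            ((∫⁻ y in ball x₀ r, ENNReal.ofReal (‖y‖ ^ (-β))) *
              (volume (ball x₀ r))⁻¹) ^ δ) := by
          rw [ENNReal.mul_rpow_of_nonneg _ _ hqm1.le,
            ← ENNReal.rpow_mul, ← ENNReal.rpow_mul, hinv_s, hinv_s']
      _ = ((wInt n w (ball x₀ r) * (volume (ball x₀ r))⁻¹) *
            (wInt n (fun y => w y ^ (1 - p / (p - 1))) (ball x₀ r) *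
              (volume (ball x₀ r))⁻¹) ^ (p - 1)) *
          (ENNReal.ofReal ((‖x₀‖ + r) ^ α) *
            ((∫⁻ y in ball x₀ r, ENNReal.ofReal (‖y‖ ^ (-β))) *
              (volume (ball x₀ r))⁻¹) ^ δ) := by ring
      _ ≤ ApConst n p w * C ^ δ :=
          mul_le_mul' (hKball x₀ r hr) (hsecond x₀ r hr)

end Aux11
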